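/- Let (X,d) be a finite ultrametric space with |X| ≥ 2 satisfying |Sp(X)| = |X|. Then the diametrical graph G_X^d (on vertex set X, with {u,v} an edge iff d(u,v) = diam X) is a complete bipartite graph: X can be partitioned into two nonempty sets X₁, X₂ such that d(u,v) = diam X holds exactly when u and v lie in different parts; moreover |Sp(X₁)| = |X₁| and |Sp(X₂)| = |X₂|. -/

import Mathlib

open Finset

theorem gh_lemma {X : Type*} [Fintype X] [DecidableEq X] (d : X → X → ℝ)
    (hnonneg : ∀ x y, 0 ≤ d x y)
    (hsymm : ∀ x y, d x y = d y x)
    (hzero : ∀ x y, d x y = 0 ↔ x = y)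
    (hultra : ∀ x y z, d x y ≤ max (d x z) (d z y)) :
    ∀ (n : ℕ) (S : Finset X), S.card ≤ n → S.Nonempty →
      ((S ×ˢ S).image (fun p => d p.1 p.2)).card ≤ S.card := by
  intro n
  induction n with
  | zero =>
    intro S hS hne
    exact absurd (card_pos.mpr hne) (by omega)
  | succ n ih =>
    intro S hS hne
    by_cases h1 : S.card ≤ 1
    · have hc1 : S.card = 1 := le_antisymm h1 (card_pos.mpr hne)
      obtain ⟨a, rfl⟩ := card_eq_one.mp hc1
      simp
    push_neg at h1
    obtain ⟨a, ha, b, hb, hab⟩ := one_lt_card.mp h1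
    have hSS : (S ×ˢ S).Nonempty := hne.product hne
    set f : X × X → ℝ := fun p => d p.1 p.2 with hf
    set D : ℝ := (S ×ˢ S).sup' hSS f with hD
    have hle : ∀ u v, u ∈ S → v ∈ S → d u v ≤ D := fun u v hu hv =>
      le_sup' (s := S ×ˢ S) f (b := (u, v)) (mem_product.mpr ⟨hu, hv⟩)
    have hDpos : 0 < D := by
      have h0 : d a b ≠ 0 := fun h => hab ((hzero a b).mp h)
      have h2 := hle a b ha hb
      have h3 := lt_of_le_of_ne (hnonneg a b) (Ne.symm h0)
      linarith
    obtain ⟨pq, hpqmem, hpq⟩ := exists_mem_eq_sup' hSS f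
    obtain ⟨hp, hq⟩ := mem_product.mp hpqmem
    set p := pq.1 with hpdef
    set q := pq.2 with hqdef
    have hdpq : d p q = D := hpq.symm
    set S₁ := S.filter (fun x => d p x < D) with hS₁
    set S₂ := S.filter (fun x => ¬ d p x < D) with hS₂
    have hpS₁ : p ∈ S₁ := by
      simp only [hS₁, mem_filter]
      exact ⟨hp, by rw [(hzero p p).mpr rfl]; exact hDpos⟩
    have hqS₂ : q ∈ S₂ := by
      simp only [hS₂, mem_filter]
      exact ⟨hq, by rw [hdpq]; exact lt_irrefl D⟩
    have hA : ∀ x, x ∈ S₂ → d p x = D := by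
      intro x hx
      simp only [hS₂, mem_filter] at hx
      exact le_antisymm (hle p x hp hx.1) (not_lt.mp hx.2)
    have hC : ∀ u v, u ∈ S₁ → v ∈ S₁ → d u v < D := by
      intro u v hu hv
      simp only [hS₁, mem_filter] at hu hv
      calc d u v ≤ max (d u p) (d p v) := hultra u v p
        _ < D := max_lt (by rw [hsymm]; exact hu.2) hv.2
    have hB : ∀ u v, u ∈ S₁ → v ∈ S₂ → d u v = D := by
      intro u v hu hv
      have h2 := hA v hv
      have hu' : d p u < D := (mem_filter.mp hu).2
      have hge : D ≤ d u v := by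
        by_contra hcon
        push_neg at hcon
        have h3 := hultra p v u
        rw [h2] at h3
        exact absurd h3 (not_le.mpr (max_lt hu' hcon))
      exact le_antisymm (hle u v (mem_of_mem_filter u hu) (mem_of_mem_filter v hv)) hge
    set sp₁ := (S₁ ×ˢ S₁).image f with hsp₁
    set sp₂ := (S₂ ×ˢ S₂).image f with hsp₂
    have hmem₂ : ∀ u v, u ∈ S₂ → v ∈ S₂ → d u v ∈ sp₂ := fun u v hu hv =>
      mem_image.mpr ⟨(u, v), mem_product.mpr ⟨hu, hv⟩, rfl⟩
    have h0mem₂ : (0 : ℝ) ∈ sp₂ := by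
      have h := hmem₂ q q hqS₂ hqS₂
      rwa [(hzero q q).mpr rfl] at h
    have h0mem : (0 : ℝ) ∈ sp₁ := by
      have h : f (p, p) ∈ sp₁ := mem_image.mpr ⟨(p, p), mem_product.mpr ⟨hpS₁, hpS₁⟩, rfl⟩
      rwa [show f (p, p) = 0 from (hzero p p).mpr rfl] at h
    have hsub : (S ×ˢ S).image f ⊆ sp₁.erase 0 ∪ insert D sp₂ := by
      intro r hr
      obtain ⟨⟨u, v⟩, huv, rfl⟩ := mem_image.mp hr
      obtain ⟨hu, hv⟩ := mem_product.mp huv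
      show d u v ∈ _
      by_cases hu1 : d p u < D
      · by_cases hv1 : d p v < D
        · have hu1' : u ∈ S₁ := mem_filter.mpr ⟨hu, hu1⟩
          have hv1' : v ∈ S₁ := mem_filter.mpr ⟨hv, hv1⟩
          by_cases h0 : d u v = 0
          · rw [h0]
            exact mem_union_right _ (mem_insert_of_mem h0mem₂)
          · exact mem_union_left _ (mem_erase.mpr ⟨h0,
              mem_image.mpr ⟨(u, v), mem_product.mpr ⟨hu1', hv1'⟩, rfl⟩⟩)
        · have := hB u v (mem_filter.mpr ⟨hu, hu1⟩) (mem_filter.mpr ⟨hv, hv1⟩)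
          exact mem_union_right _ (this ▸ mem_insert_self D sp₂)
      · by_cases hv1 : d p v < D
        · have h2 := hB v u (mem_filter.mpr ⟨hv, hv1⟩) (mem_filter.mpr ⟨hu, hu1⟩)
          rw [hsymm] at h2
          exact mem_union_right _ (h2 ▸ mem_insert_self D sp₂)
        · exact mem_union_right _ (mem_insert_of_mem
            (hmem₂ u v (mem_filter.mpr ⟨hu, hu1⟩) (mem_filter.mpr ⟨hv, hv1⟩)))
    have hcards : S₁.card + S₂.card = S.card := card_filter_add_card_filter_not _
    have hc₁ : 1 ≤ S₁.card := card_pos.mpr ⟨p, hpS₁⟩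
    have hc₂ : 1 ≤ S₂.card := card_pos.mpr ⟨q, hqS₂⟩
    have ih₁ := ih S₁ (by omega) ⟨p, hpS₁⟩
    have ih₂ := ih S₂ (by omega) ⟨q, hqS₂⟩
    simp only [← hf, ← hsp₁, ← hsp₂] at ih₁ ih₂
    have hsp₁pos : 1 ≤ sp₁.card := card_pos.mpr ⟨0, h0mem⟩
    calc ((S ×ˢ S).image f).card
        ≤ (sp₁.erase 0 ∪ insert D sp₂).card := card_le_card hsub
      _ ≤ (sp₁.erase 0).card + (insert D sp₂).card := card_union_le _ _
      _ ≤ (sp₁.card - 1) + (sp₂.card + 1) := by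
          rw [card_erase_of_mem h0mem]
          exact add_le_add le_rfl (card_insert_le _ _)
      _ ≤ S.card := by omega

/-- If a finite ultrametric space with at least two points is extremal for the
Gomory-Hu inequality, then its diametrical graph is complete bipartite and
both parts are extremal. -/
theorem diametrical_graph_bipartite {X : Type*} [Fintype X] [Nonempty X] [DecidableEq X]
    (d : X → X → ℝ)
    (hcard : 2 ≤ Fintype.card X)
    (hnonneg : ∀ x y, 0 ≤ d x y)
    (hsymm : ∀ x y, d x y = d y x)
    (hzero : ∀ x y, d x y = 0 ↔ x = y)
    (hultra : ∀ x y z, d x y ≤ max (d x z) (d z y))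
    (hext : (Finset.univ.image (fun p : X × X => d p.1 p.2)).card = Fintype.card X) :
    ∃ X₁ X₂ : Finset X, X₁.Nonempty ∧ X₂.Nonempty ∧
      X₁ ∪ X₂ = Finset.univ ∧ X₁ ∩ X₂ = ∅ ∧
      (∀ u v : X,
        d u v = Finset.univ.sup' Finset.univ_nonempty (fun p : X × X => d p.1 p.2) ↔
          ((u ∈ X₁ ∧ v ∈ X₂) ∨ (u ∈ X₂ ∧ v ∈ X₁))) ∧
      ((X₁ ×ˢ X₁).image (fun p => d p.1 p.2)).card = X₁.card ∧
      ((X₂ ×ˢ X₂).image (fun p => d p.1 p.2)).card = X₂.card := by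
  classical
  set f : X × X → ℝ := fun p => d p.1 p.2 with hf
  set D : ℝ := Finset.univ.sup' Finset.univ_nonempty f with hD
  have hle : ∀ u v : X, d u v ≤ D := fun u v =>
    le_sup' (s := (Finset.univ : Finset (X × X))) f (b := (u, v)) (mem_univ _)
  obtain ⟨a, b, hab⟩ := Fintype.exists_pair_of_one_lt_card (α := X) (by omega)
  have hDpos : 0 < D := by
    have h0 : d a b ≠ 0 := fun h => hab ((hzero a b).mp h)
    have h2 := hle a b
    have h3 := lt_of_le_of_ne (hnonneg a b) (Ne.symm h0)
    linarith
  obtain ⟨pq, -, hpq⟩ := exists_mem_eq_sup' (Finset.univ_nonempty (α := X × X)) f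
  set p := pq.1 with hpdef
  set q := pq.2 with hqdef
  have hdpq : d p q = D := hpq.symm
  set X₁ := Finset.univ.filter (fun x : X => d p x < D) with hX₁
  set X₂ := Finset.univ.filter (fun x : X => ¬ d p x < D) with hX₂
  have hpX₁ : p ∈ X₁ := by
    simp only [hX₁, mem_filter]
    exact ⟨mem_univ _, by rw [(hzero p p).mpr rfl]; exact hDpos⟩
  have hqX₂ : q ∈ X₂ := by
    simp only [hX₂, mem_filter]
    exact ⟨mem_univ _, by rw [hdpq]; exact lt_irrefl D⟩
  have hA : ∀ x, x ∈ X₂ → d p x = D := by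
    intro x hx
    simp only [hX₂, mem_filter] at hx
    exact le_antisymm (hle p x) (not_lt.mp hx.2)
  have hC : ∀ u v, u ∈ X₁ → v ∈ X₁ → d u v < D := by
    intro u v hu hv
    simp only [hX₁, mem_filter] at hu hv
    calc d u v ≤ max (d u p) (d p v) := hultra u v p
      _ < D := max_lt (by rw [hsymm]; exact hu.2) hv.2
  have hB : ∀ u v, u ∈ X₁ → v ∈ X₂ → d u v = D := by
    intro u v hu hv
    have h2 := hA v hv
    have hu' : d p u < D := (mem_filter.mp hu).2
    have hge : D ≤ d u v := by
      by_contra hcon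
      push_neg at hcon
      have h3 := hultra p v u
      rw [h2] at h3
      exact absurd h3 (not_le.mpr (max_lt hu' hcon))
    exact le_antisymm (hle u v) hge
  set sp₁ := (X₁ ×ˢ X₁).image f with hsp₁
  set sp₂ := (X₂ ×ˢ X₂).image f with hsp₂
  have hmem₁ : ∀ u v, u ∈ X₁ → v ∈ X₁ → d u v ∈ sp₁ := fun u v hu hv =>
    mem_image.mpr ⟨(u, v), mem_product.mpr ⟨hu, hv⟩, rfl⟩
  have hmem₂ : ∀ u v, u ∈ X₂ → v ∈ X₂ → d u v ∈ sp₂ := fun u v hu hv =>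
    mem_image.mpr ⟨(u, v), mem_product.mpr ⟨hu, hv⟩, rfl⟩
  have h0mem₂ : (0 : ℝ) ∈ sp₂ := by
    have h := hmem₂ q q hqX₂ hqX₂
    rwa [(hzero q q).mpr rfl] at h
  have h0mem : (0 : ℝ) ∈ sp₁ := by
    have h := hmem₁ p p hpX₁ hpX₁
    rwa [(hzero p p).mpr rfl] at h
  have hcases : ∀ x : X, x ∈ X₁ ∨ x ∈ X₂ := by
    intro x
    by_cases hx : d p x < D
    · exact Or.inl (mem_filter.mpr ⟨mem_univ _, hx⟩)
    · exact Or.inr (mem_filter.mpr ⟨mem_univ _, hx⟩)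
  have hcards : X₁.card + X₂.card = Fintype.card X := by
    rw [← card_univ]
    exact card_filter_add_card_filter_not _
  have hc₁ : 1 ≤ X₁.card := card_pos.mpr ⟨p, hpX₁⟩
  have hc₂ : 1 ≤ X₂.card := card_pos.mpr ⟨q, hqX₂⟩
  have ih₁ := gh_lemma d hnonneg hsymm hzero hultra X₁.card X₁ le_rfl ⟨p, hpX₁⟩
  have ih₂ := gh_lemma d hnonneg hsymm hzero hultra X₂.card X₂ le_rfl ⟨q, hqX₂⟩
  simp only [← hf, ← hsp₁, ← hsp₂] at ih₁ ih₂
  have hsp₁pos : 1 ≤ sp₁.card := card_pos.mpr ⟨0, h0mem⟩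
  have hT : (Finset.univ.image f).card = Fintype.card X := hext
  -- Step 1 : D is not in the spectrum of X₂
  have hDnot₂ : D ∉ sp₂ := by
    intro hDin
    have hsub : Finset.univ.image f ⊆ sp₁.erase 0 ∪ sp₂ := by
      intro r hr
      obtain ⟨⟨u, v⟩, -, rfl⟩ := mem_image.mp hr
      show d u v ∈ _
      rcases hcases u with hu | hu <;> rcases hcases v with hv | hv
      · by_cases h0 : d u v = 0
        · rw [h0]; exact mem_union_right _ h0mem₂
        · exact mem_union_left _ (mem_erase.mpr ⟨h0, hmem₁ u v hu hv⟩)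
      · rw [hB u v hu hv]; exact mem_union_right _ hDin
      · have h2 := hB v u hv hu
        rw [hsymm] at h2
        rw [h2]; exact mem_union_right _ hDin
      · exact mem_union_right _ (hmem₂ u v hu hv)
    have hchain : Fintype.card X ≤ (sp₁.card - 1) + sp₂.card := by
      calc Fintype.card X = (Finset.univ.image f).card := hT.symm
        _ ≤ (sp₁.erase 0 ∪ sp₂).card := card_le_card hsub
        _ ≤ (sp₁.erase 0).card + sp₂.card := card_union_le _ _
        _ = (sp₁.card - 1) + sp₂.card := by rw [card_erase_of_mem h0mem]
    omega
  -- Step 2 : the bipartite characterization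
  have hiff : ∀ u v : X, d u v = D ↔ ((u ∈ X₁ ∧ v ∈ X₂) ∨ (u ∈ X₂ ∧ v ∈ X₁)) := by
    intro u v
    constructor
    · intro huv
      rcases hcases u with hu | hu <;> rcases hcases v with hv | hv
      · exact absurd huv (ne_of_lt (hC u v hu hv))
      · exact Or.inl ⟨hu, hv⟩
      · exact Or.inr ⟨hu, hv⟩
      · exact absurd (huv ▸ hmem₂ u v hu hv) hDnot₂
    · rintro (⟨hu, hv⟩ | ⟨hu, hv⟩)
      · exact hB u v hu hv
      · rw [hsymm]; exact hB v u hv hu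
  -- Step 3 : extremality of both parts
  have hDnot₁ : D ∉ sp₁.erase 0 := by
    intro hDin
    obtain ⟨⟨u, v⟩, huv, hfe⟩ := mem_image.mp (mem_of_mem_erase hDin)
    obtain ⟨hu, hv⟩ := mem_product.mp huv
    exact absurd hfe (ne_of_lt (hC u v hu hv))
  have hsub2 : Finset.univ.image f ⊆ sp₁.erase 0 ∪ insert D sp₂ := by
    intro r hr
    obtain ⟨⟨u, v⟩, -, rfl⟩ := mem_image.mp hr
    show d u v ∈ _
    rcases hcases u with hu | hu <;> rcases hcases v with hv | hv
    · by_cases h0 : d u v = 0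
      · rw [h0]; exact mem_union_right _ (mem_insert_of_mem h0mem₂)
      · exact mem_union_left _ (mem_erase.mpr ⟨h0, hmem₁ u v hu hv⟩)
    · rw [hB u v hu hv]; exact mem_union_right _ (mem_insert_self _ _)
    · have h2 := hB v u hv hu
      rw [hsymm] at h2
      rw [h2]; exact mem_union_right _ (mem_insert_self _ _)
    · exact mem_union_right _ (mem_insert_of_mem (hmem₂ u v hu hv))
  have hchain2 : Fintype.card X ≤ (sp₁.card - 1) + (sp₂.card + 1) := by
    calc Fintype.card X = (Finset.univ.image f).card := hT.symm
      _ ≤ (sp₁.erase 0 ∪ insert D sp₂).card := card_le_card hsub2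
      _ ≤ (sp₁.erase 0).card + (insert D sp₂).card := card_union_le _ _
      _ ≤ (sp₁.card - 1) + (sp₂.card + 1) := by
          rw [card_erase_of_mem h0mem]
          exact add_le_add le_rfl (card_insert_le _ _)
  have hex₁ : sp₁.card = X₁.card := by omega
  have hex₂ : sp₂.card = X₂.card := by omega
  refine ⟨X₁, X₂, ⟨p, hpX₁⟩, ⟨q, hqX₂⟩, filter_union_filter_not_eq _ _, ?_, hiff, hex₁, hex₂⟩
  exact disjoint_iff_inter_eq_empty.mp
    (disjoint_filter_filter_not Finset.univ Finset.univ (fun x : X => d p x < D))
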